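/- For every cycle C_n with n ≥ 3, the 2-multigraph ²C_n admits a locally irregular edge coloring with at most 2 colors. -/

import Mathlib

open Finset SimpleGraph

/-- Degree of `v` in the color class `k` of the edge coloring `c` of `G`. -/
def degIn {V K : Type*} [Fintype V] (G : SimpleGraph V) [DecidableRel G.Adj] [DecidableEq K]
    (c : Sym2 V → K) (k : K) (v : V) : ℕ :=
  (Finset.univ.filter fun w => G.Adj v w ∧ c s(v, w) = k).card

/-- `c` is a locally irregular edge coloring of the simple graph `G`. -/
def IsLIC {V K : Type*} [Fintype V] (G : SimpleGraph V) [DecidableRel G.Adj] [DecidableEq K]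
    (c : Sym2 V → K) : Prop :=
  ∀ v w, G.Adj v w → degIn G c (c s(v, w)) v ≠ degIn G c (c s(v, w)) w

/-- In the 2-multigraph `²G`, each edge of `G` carries a pair of colors (one for each
parallel copy).  `degIn2 G c k v` is the degree of `v` in the color class `k`. -/
def degIn2 {V K : Type*} [Fintype V] (G : SimpleGraph V) [DecidableRel G.Adj] [DecidableEq K]
    (c : Sym2 V → K × K) (k : K) (v : V) : ℕ :=
  ∑ w ∈ Finset.univ.filter (fun w => G.Adj v w),
    ((if (c s(v, w)).1 = k then 1 else 0) + (if (c s(v, w)).2 = k then 1 else 0))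

/-- `c` is a locally irregular edge coloring of the 2-multigraph `²G`. -/
def IsLIC2 {V K : Type*} [Fintype V] (G : SimpleGraph V) [DecidableRel G.Adj] [DecidableEq K]
    (c : Sym2 V → K × K) : Prop :=
  ∀ v w, G.Adj v w → ∀ k : K, ((c s(v, w)).1 = k ∨ (c s(v, w)).2 = k) →
    degIn2 G c k v ≠ degIn2 G c k w

instance {n : ℕ} : DecidableRel (SimpleGraph.pathGraph n).Adj := fun _ _ =>
  decidable_of_iff _ (SimpleGraph.pathGraph_adj).symm

/-! ### Auxiliary definitions -/

/-- Number of copies of color `0` to put on edge number `i` of the cycle `C_n`. -/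
def aaux (n i : ℕ) : ℕ :=
  if n % 3 = 2 ∧ n - 2 ≤ i then (if i = n - 2 then 2 else 0) else i % 3

lemma aaux_le (n i : ℕ) : aaux n i ≤ 2 := by
  unfold aaux; split_ifs <;> omega

/-- The pair of colors corresponding to `a` copies of color `0`. -/
def patt (a : ℕ) : Fin 2 × Fin 2 :=
  if a = 0 then (1, 1) else if a = 1 then (0, 1) else (0, 0)

/-- Number of copies of color `k` in a pair. -/
def cntt (k : Fin 2) (p : Fin 2 × Fin 2) : ℕ :=
  (if p.1 = k then 1 else 0) + (if p.2 = k then 1 else 0)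

lemma cntt_patt_inj (k : Fin 2) {a b : ℕ} (ha : a ≤ 2) (hb : b ≤ 2) (h : a ≠ b) :
    cntt k (patt a) ≠ cntt k (patt b) := by
  interval_cases a <;> interval_cases b <;> fin_cases k <;> simp_all [cntt, patt]

/-- Key combinatorial fact: the sequence `aaux n` differs at distance 2 around the cycle. -/
lemma aaux_key (n j : ℕ) (hn : 3 ≤ n) (hj : j < n) :
    aaux n j ≠ aaux n ((j + 2) % n) := by
  rcases lt_or_ge (j + 2) n with h | h
  · rw [Nat.mod_eq_of_lt h]
    unfold aaux; split_ifs <;> omega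
  · have h2 : (j + 2) % n = j + 2 - n := by
      rw [Nat.mod_eq_sub_mod h, Nat.mod_eq_of_lt (by omega)]
    rw [h2]; unfold aaux; split_ifs <;> omega

/-- The (symmetric) coloring function on ordered pairs. -/
def gfun (m : ℕ) (v w : Fin (m + 3)) : Fin 2 × Fin 2 :=
  if w = v + 1 ∧ v = w + 1 then (0, 0)
  else if w = v + 1 then patt (aaux (m + 3) v.val)
  else if v = w + 1 then patt (aaux (m + 3) w.val)
  else (0, 0)

lemma gfun_symm (m : ℕ) (v w : Fin (m + 3)) : gfun m v w = gfun m w v := by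
  unfold gfun
  split_ifs <;> tauto

/-- The coloring of the doubled cycle. -/
def colr (m : ℕ) : Sym2 (Fin (m + 3)) → Fin 2 × Fin 2 :=
  Sym2.lift ⟨gfun m, gfun_symm m⟩

/-- For every cycle `C_n` with `n ≥ 3`, the doubled multigraph `²C_n` admits a
locally irregular edge coloring with at most 2 colors. -/
theorem stmt_10 (n : ℕ) (hn : 3 ≤ n) :
    ∃ c : Sym2 (Fin n) → Fin 2 × Fin 2, IsLIC2 (cycleGraph n) c := by
  obtain ⟨m, rfl⟩ : ∃ m, n = m + 3 := ⟨n - 3, by omega⟩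
  -- basic Fin facts
  have hval2 : ((2 : Fin (m + 3))).val = 2 := rfl
  have h20 : (2 : Fin (m + 3)) ≠ 0 := by
    intro h
    have := congrArg Fin.val h
    rw [hval2] at this
    simp at this
  have hvne : ∀ v : Fin (m + 3), v ≠ v + 2 := by
    intro v h
    apply h20
    have h' : v + 0 = v + 2 := by rw [add_zero]; exact h
    exact (add_left_cancel h').symm
  have hne : ∀ v : Fin (m + 3), v - 1 ≠ v + 1 := by
    intro v h
    apply hvne (v - 1)
    calc v - 1 = v + 1 := h
    _ = v - 1 + 2 := by open Fin.CommRing in ring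
  -- evaluate the coloring on edges
  have hc1 : ∀ v : Fin (m + 3), colr m s(v, v + 1) = patt (aaux (m + 3) v.val) := by
    intro v
    show gfun m v (v + 1) = _
    unfold gfun
    rw [if_neg, if_pos rfl]
    rintro ⟨-, h⟩
    exact hvne v (h.trans (by open Fin.CommRing in ring))
  have hc2 : ∀ v : Fin (m + 3), colr m s(v, v - 1) = patt (aaux (m + 3) (v - 1).val) := by
    intro v
    show gfun m v (v - 1) = _
    unfold gfun
    rw [if_neg, if_neg, if_pos (by open Fin.CommRing in ring)]
    · exact fun h => hne v h
    · rintro ⟨h, -⟩; exact hne v h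
  -- the neighborhood of a vertex
  have hfilt : ∀ v : Fin (m + 3),
      (Finset.univ.filter fun w => (cycleGraph (m + 3)).Adj v w) = {v - 1, v + 1} := by
    intro v
    have h : (Finset.univ.filter fun w => (cycleGraph (m + 3)).Adj v w)
        = (cycleGraph (m + 3)).neighborFinset v := by
      ext w; simp [SimpleGraph.mem_neighborFinset]
    rw [h]
    exact cycleGraph_neighborFinset
  -- degree formula
  have hdeg : ∀ (k : Fin 2) (v : Fin (m + 3)), degIn2 (cycleGraph (m + 3)) (colr m) k v
      = cntt k (patt (aaux (m + 3) (v - 1).val)) + cntt k (patt (aaux (m + 3) v.val)) := by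
    intro k v
    rw [degIn2, hfilt v, Finset.sum_pair (hne v), hc1, hc2]
    rfl
  refine ⟨colr m, ?_⟩
  -- the main inequality along an oriented edge
  have main : ∀ (v : Fin (m + 3)) (k : Fin 2),
      degIn2 (cycleGraph (m + 3)) (colr m) k v
        ≠ degIn2 (cycleGraph (m + 3)) (colr m) k (v + 1) := by
    intro v k
    rw [hdeg, hdeg]
    have he : v + 1 - 1 = v := by open Fin.CommRing in ring
    rw [he]
    have hval : (v + 1).val = ((v - 1).val + 2) % (m + 3) := by
      have h : v + 1 = (v - 1) + 2 := by open Fin.CommRing in ring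
      rw [h, Fin.add_def, hval2]
    have hkey : aaux (m + 3) (v - 1).val ≠ aaux (m + 3) (v + 1).val := by
      rw [hval]
      exact aaux_key (m + 3) (v - 1).val (by omega) (v - 1).isLt
    have hcn := cntt_patt_inj k (aaux_le (m + 3) (v - 1).val)
      (aaux_le (m + 3) (v + 1).val) hkey
    set A := cntt k (patt (aaux (m + 3) (v - 1).val))
    set B := cntt k (patt (aaux (m + 3) v.val))
    set C := cntt k (patt (aaux (m + 3) (v + 1).val))
    omega
  intro v w hadj k _
  rw [cycleGraph_adj'] at hadj
  have h1 : (1 : Fin (m + 3)).val = 1 := rfl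
  rcases hadj with h | h
  · -- v - w = 1, i.e. v = w + 1
    have hv : v = w + 1 := by
      have h' : v - w = 1 := Fin.ext (by rw [h1]; exact h)
      rw [← h']; open Fin.CommRing in ring
    rw [hv]
    exact (main w k).symm
  · -- w - v = 1, i.e. w = v + 1
    have hw : w = v + 1 := by
      have h' : w - v = 1 := Fin.ext (by rw [h1]; exact h)
      rw [← h']; open Fin.CommRing in ring
    rw [hw]
    exact main v k
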